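/- Let p > 1 and t > 0, r, s ≥ 0. Define G(t,s,r) = (1+(p−1)t^p)r^p + (1+(p−1)t^{−p})s^p + (1+t²)r² + (1+t^{−2})s² − p t^{p−1} r^{p−1} s − p t^{1−p} s^{p−1} r − 2 t r s − 2 t^{−1} r s. Then G(t,s,r) ≥ 0, and G(t,s,r) = 0 if and only if s = t r. -/

import Mathlib

lemma young (p a b : ℝ) (hp : 1 < p) (ha : 0 ≤ a) (hb : 0 ≤ b) :
    p * (a * b ^ (p - 1)) ≤ a ^ p + (p - 1) * b ^ p := by
  have hp0 : (0:ℝ) < p := lt_trans one_pos hp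
  have hp1 : (0:ℝ) < p - 1 := sub_pos.2 hp
  have hpq : p.HolderConjugate (p / (p - 1)) := Real.HolderConjugate.conjExponent hp
  have h := Real.young_inequality_of_nonneg ha (Real.rpow_nonneg hb (p - 1)) hpq
  rw [← Real.rpow_mul hb] at h
  have hexp : (p - 1) * (p / (p - 1)) = p := by field_simp
  rw [hexp] at h
  have := mul_le_mul_of_nonneg_left h hp0.le
  calc p * (a * b ^ (p - 1)) ≤ p * (a ^ p / p + b ^ p / (p / (p - 1))) := this
    _ = a ^ p + (p - 1) * b ^ p := by field_simp

/-- The scalar function `G(t,s,r)` underlying the Picone-type identity for `-Δ_p - Δ`. -/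
noncomputable def Gfun (p t s r : ℝ) : ℝ :=
  (1 + (p - 1) * t ^ p) * r ^ p + (1 + (p - 1) * t ^ (-p)) * s ^ p
    + (1 + t ^ (2 : ℕ)) * r ^ (2 : ℕ) + (1 + t⁻¹ ^ (2 : ℕ)) * s ^ (2 : ℕ)
    - p * t ^ (p - 1) * r ^ (p - 1) * s - p * t ^ (1 - p) * s ^ (p - 1) * r
    - 2 * t * r * s - 2 * t⁻¹ * r * s

/-- For `p > 1`, `t > 0`, `r, s ≥ 0`, one has `G(t,s,r) ≥ 0`, with equality
if and only if `s = t r`. -/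
theorem Gfun_nonneg (p t s r : ℝ) (hp : 1 < p) (ht : 0 < t) (hs : 0 ≤ s) (hr : 0 ≤ r) :
    0 ≤ Gfun p t s r ∧ (Gfun p t s r = 0 ↔ s = t * r) := by
  have hp0 : (0:ℝ) < p := lt_trans one_pos hp
  have htp : (0:ℝ) < t ^ p := Real.rpow_pos_of_pos ht p
  have htp1 : (0:ℝ) < t ^ (p - 1) := Real.rpow_pos_of_pos ht (p - 1)
  have hnegp : t ^ (-p) = (t ^ p)⁻¹ := Real.rpow_neg ht.le p
  have h1p : t ^ (1 - p) = (t ^ (p - 1))⁻¹ := by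
    rw [show (1 - p) = -(p - 1) by ring, Real.rpow_neg ht.le]
  have key : Gfun p t s r =
      (s ^ p + (p - 1) * (t ^ p * r ^ p) - p * (t ^ (p - 1) * r ^ (p - 1)) * s)
      + (r ^ p + (p - 1) * ((t ^ p)⁻¹ * s ^ p) - p * ((t ^ (p - 1))⁻¹ * s ^ (p - 1)) * r)
      + (1 + t⁻¹ ^ (2 : ℕ)) * (t * r - s) ^ (2 : ℕ) := by
    rw [Gfun, hnegp, h1p]
    field_simp
    ring
  -- Young inequalities
  have a1 := young p s (t * r) hp hs (mul_nonneg ht.le hr)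
  simp only [Real.mul_rpow ht.le hr] at a1
  have a2 := young p r (s / t) hp hr (div_nonneg hs ht.le)
  rw [Real.div_rpow hs ht.le, Real.div_rpow hs ht.le] at a2
  simp only [div_eq_mul_inv] at a2
  have hA1 : 0 ≤ s ^ p + (p - 1) * (t ^ p * r ^ p) - p * (t ^ (p - 1) * r ^ (p - 1)) * s := by
    nlinarith [a1]
  have hA2 : 0 ≤ r ^ p + (p - 1) * ((t ^ p)⁻¹ * s ^ p)
      - p * ((t ^ (p - 1))⁻¹ * s ^ (p - 1)) * r := by nlinarith [a2]
  have hB : (0:ℝ) ≤ (1 + t⁻¹ ^ (2 : ℕ)) * (t * r - s) ^ (2 : ℕ) := by positivity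
  have hBpos : (0:ℝ) < 1 + t⁻¹ ^ (2 : ℕ) := by positivity
  refine ⟨by rw [key]; linarith, ?_, ?_⟩
  · intro h
    rw [key] at h
    have h0 : (1 + t⁻¹ ^ (2 : ℕ)) * (t * r - s) ^ (2 : ℕ) = 0 :=
      le_antisymm (by linarith) hB
    rcases mul_eq_zero.mp h0 with h' | h'
    · exact absurd h' hBpos.ne'
    · have h3 : t * r - s = 0 := sq_eq_zero_iff.mp h'
      linarith
  · intro h
    subst h
    rcases eq_or_lt_of_le hr with hre | hrpos
    · simp [Gfun, ← hre, Real.zero_rpow hp0.ne',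
        Real.zero_rpow (show p - 1 ≠ 0 by intro hh; nlinarith)]
    · rw [key]
      have e1 : t ^ (p - 1) * t = t ^ p := by
        have h' := Real.rpow_add ht (p - 1) 1
        rw [Real.rpow_one] at h'; rw [← h']; norm_num
      have e2 : r ^ (p - 1) * r = r ^ p := by
        have h' := Real.rpow_add hrpos (p - 1) 1
        rw [Real.rpow_one] at h'; rw [← h']; norm_num
      have e3 : (t ^ p)⁻¹ * t ^ p = 1 := inv_mul_cancel₀ htp.ne'
      have e4 : (t ^ (p - 1))⁻¹ * t ^ (p - 1) = 1 := inv_mul_cancel₀ htp1.ne'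
      simp only [Real.mul_rpow ht.le hr]
      linear_combination (-p * (r ^ (p - 1) * r)) * e1 + (-p * t ^ p - p) * e2
        + ((p - 1) * r ^ p) * e3 + (-p * (r ^ (p - 1) * r)) * e4
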